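/- For every finite linearly ordered set J with at least 2 elements, the canonical map J → J** is an isomorphism, where J* = Hom_∇(J,{0,1}) with pointwise order (a nonempty finite linearly ordered set) and J** = Hom_{Δ_big}(J*,{0,1}). -/

import Mathlib

/-!
STATEMENT 2: For every finite linearly ordered set `J` with at least 2 elements
(equivalently, with distinct minimal element `⊥` and maximal element `⊤`),
the canonical map `J → J**` is an isomorphism of ordered sets, where
`J* = Hom_∇(J, {0,1})` is the set of nondecreasing maps `J → Fin 2` sending
`⊥ ↦ 0`, `⊤ ↦ 1`, with the pointwise order (a nonempty finite linear order,
i.e. an object of `Δ_big`), and `J** = Hom_{Δ_big}(J*, {0,1})` is the set of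
all nondecreasing maps `J* → Fin 2`, with the pointwise order.
The canonical map sends `j` to evaluation at `j`.
-/

/-- `J*`: nondecreasing maps `J → Fin 2` preserving min and max. -/
def NablaStar (J : Type*) [Preorder J] [OrderBot J] [OrderTop J] : Type _ :=
  {f : J →o Fin 2 // f ⊥ = 0 ∧ f ⊤ = 1}

instance (J : Type*) [Preorder J] [OrderBot J] [OrderTop J] :
    Preorder (NablaStar J) := Subtype.preorder _

/-- `J**`: all nondecreasing maps `J* → Fin 2`, with the pointwise order. -/
def NablaDoubleStar (J : Type*) [Preorder J] [OrderBot J] [OrderTop J] : Type _ :=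
  {g : NablaStar J → Fin 2 // Monotone g}

instance (J : Type*) [Preorder J] [OrderBot J] [OrderTop J] :
    Preorder (NablaDoubleStar J) := Subtype.preorder _

/-- The canonical map `J → J**`, sending `j` to evaluation at `j`. -/
def nablaEvalMap (J : Type*) [Preorder J] [OrderBot J] [OrderTop J] (j : J) :
    NablaDoubleStar J :=
  ⟨fun f => f.1 j, fun _ _ h => h j⟩

section Aux
set_option linter.unusedSectionVars false
variable {J : Type*} [LinearOrder J] [Fintype J] [BoundedOrder J]

def nablaChi (x : J) (hx : x ≠ ⊥) : NablaStar J :=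
  ⟨⟨fun t => if x ≤ t then 1 else 0, by
      intro a b hab
      dsimp
      split_ifs with h1 h2
      · exact le_refl _
      · exact absurd (h1.trans hab) h2
      · exact Fin.zero_le _
      · exact le_refl _⟩,
    by
      constructor
      · show (if x ≤ ⊥ then (1 : Fin 2) else 0) = 0
        simp [le_bot_iff, hx]
      · show (if x ≤ ⊤ then (1 : Fin 2) else 0) = 1
        simp⟩

lemma nablaChi_apply (x : J) (hx : x ≠ ⊥) (t : J) :
    (nablaChi x hx).1 t = if x ≤ t then 1 else 0 := rfl

lemma nablaChi_le (x y : J) (hx : x ≠ ⊥) (hy : y ≠ ⊥) (hxy : y ≤ x) :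
    nablaChi x hx ≤ (nablaChi y hy : NablaStar J) := by
  intro t
  show (if x ≤ t then (1 : Fin 2) else 0) ≤ if y ≤ t then 1 else 0
  split_ifs with h1 h2
  · exact le_refl _
  · exact absurd (hxy.trans h1) h2
  · exact Fin.zero_le _
  · exact le_refl _

lemma fin2_eq_one_of_one_le {a : Fin 2} (h : 1 ≤ a) : a = 1 := by omega

lemma nablaStar_rep (f : NablaStar J) : ∃ (x : J) (hx : x ≠ ⊥), f = nablaChi x hx := by
  classical
  have hne : (Finset.univ.filter (fun t => f.1 t = 1)).Nonempty :=
    ⟨⊤, by simp [f.2.2]⟩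
  set x := (Finset.univ.filter (fun t => f.1 t = 1)).min' hne with hxdef
  have hx1 : f.1 x = 1 := by
    have := (Finset.univ.filter (fun t => f.1 t = 1)).min'_mem hne
    simpa using this
  have hxb : x ≠ ⊥ := by
    intro hh
    rw [hh, f.2.1] at hx1
    exact absurd hx1 (by decide)
  refine ⟨x, hxb, ?_⟩
  apply Subtype.ext
  apply OrderHom.ext
  funext t
  rw [nablaChi_apply]
  split_ifs with hle
  · have := f.1.monotone hle
    rw [hx1] at this
    exact fin2_eq_one_of_one_le this
  · by_contra hc
    have ht1 : f.1 t = 1 := by omega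
    have : x ≤ t := Finset.min'_le _ _ (by simp [ht1])
    exact hle this

end Aux

theorem nablaEvalMap_isOrderIso (J : Type*) [LinearOrder J] [Fintype J]
    [BoundedOrder J] (h : (⊥ : J) ≠ ⊤) :
    Function.Bijective (nablaEvalMap J) ∧
      ∀ i j : J, i ≤ j ↔ nablaEvalMap J i ≤ nablaEvalMap J j := by
  classical
  have hrefl : ∀ i j : J, nablaEvalMap J i ≤ nablaEvalMap J j → i ≤ j := by
    intro i j hij
    by_contra hc
    have hji : j < i := lt_of_not_ge hc
    have hi : i ≠ ⊥ := by
      intro hh; rw [hh] at hji; exact absurd hji not_lt_bot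
    have key : (if i ≤ i then (1 : Fin 2) else 0) ≤ (if i ≤ j then 1 else 0) :=
      hij (nablaChi i hi)
    simp [hc] at key
  have hmono : ∀ i j : J, i ≤ j → nablaEvalMap J i ≤ nablaEvalMap J j := by
    intro i j hij f
    exact f.1.monotone hij
  have hinj : Function.Injective (nablaEvalMap J) := by
    intro i j hij
    exact le_antisymm (hrefl i j (le_of_eq hij)) (hrefl j i (le_of_eq hij.symm))
  have hsurj : Function.Surjective (nablaEvalMap J) := by
    intro g
    set G : J → Fin 2 := fun x => if hx : x ≠ ⊥ then g.1 (nablaChi x hx) else 0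
      with hGdef
    have hG : ∀ (x : J) (hx : x ≠ ⊥), G x = g.1 (nablaChi x hx) := by
      intro x hx; simp [hGdef, hx]
    set s := Finset.univ.filter (fun x : J => G x = 1) with hsdef
    by_cases hne : s.Nonempty
    · set j := s.max' hne with hjdef
      have hjmem : G j = 1 := (Finset.mem_filter.mp (s.max'_mem hne)).2
      have hj : j ≠ ⊥ := by
        intro hh
        rw [hGdef] at hjmem
        simp [hh] at hjmem
      have hgj : g.1 (nablaChi j hj) = 1 := by rw [← hG j hj]; exact hjmem
      refine ⟨j, ?_⟩
      apply Subtype.ext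
      funext f
      obtain ⟨x, hx, rfl⟩ := nablaStar_rep f
      show (if x ≤ j then (1 : Fin 2) else 0) = g.1 (nablaChi x hx)
      by_cases hxj : x ≤ j
      · rw [if_pos hxj]
        have hle : nablaChi j hj ≤ (nablaChi x hx : NablaStar J) :=
          nablaChi_le j x hj hx hxj
        have := g.2 hle
        rw [hgj] at this
        exact (fin2_eq_one_of_one_le this).symm
      · rw [if_neg hxj]
        by_contra hc
        have hgx : g.1 (nablaChi x hx) = 1 := by omega
        have hmem : x ∈ s := by
          rw [hsdef]
          simp [hG x hx, hgx]
        have := Finset.le_max' s x hmem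
        exact hxj this
    · refine ⟨⊥, ?_⟩
      apply Subtype.ext
      funext f
      obtain ⟨x, hx, rfl⟩ := nablaStar_rep f
      show (if x ≤ ⊥ then (1 : Fin 2) else 0) = g.1 (nablaChi x hx)
      rw [if_neg (by simpa [le_bot_iff] using hx)]
      have hnm : x ∉ s := fun hm => hne ⟨x, hm⟩
      rw [hsdef] at hnm
      simp [hG x hx] at hnm
      omega
  exact ⟨⟨hinj, hsurj⟩, fun i j => ⟨hmono i j, hrefl i j⟩⟩
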